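/- Under Assumption A1 and the null hypothesis H0, for any fixed distinct lags i ≠ j (i, j ≥ 1), the covariance between the normalized empirical autocovariances of the squared errors vanishes asymptotically: lim_{n→∞} Cov(n^{1/2} γ_n(i), n^{1/2} γ_n(j)) = 0, where n^{1/2} γ_n(i) = n^{−1/2} Σ_{t=i+1}^n (u_t² − E(u_t²))(u_{t−i}² − E(u_{t−i}²)). -/

import Mathlib

open MeasureTheory ProbabilityTheory Filter Finset Set Topology

noncomputable section

/-- A function is piecewise Lipschitz on `(0,1]`: there are finitely many mutually disjoint
intervals covering `(0,1]` on each of which the function is Lipschitz. -/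
def PiecewiseLipschitzOn01 (g : ℝ → ℝ) : Prop :=
  ∃ (q : ℕ) (I : Fin q → Set ℝ) (C : Fin q → NNReal),
    (∀ l, (I l).OrdConnected) ∧ Pairwise (Function.onFun Disjoint I) ∧
      (⋃ l, I l) = Set.Ioc (0 : ℝ) 1 ∧ ∀ l, LipschitzOnWith (C l) g (I l)

/-- Convergence in distribution (weak convergence of the laws of `X n` under `μ` to `ν`). -/
def TendstoInDistribution {Ω E : Type*} [MeasurableSpace Ω] [MeasurableSpace E]
    [TopologicalSpace E] (X : ℕ → Ω → E) (μ : Measure Ω) (ν : Measure E) : Prop :=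
  ∀ f : BoundedContinuousFunction E ℝ,
    Tendsto (fun n => ∫ ω, f (X n ω) ∂μ) atTop (𝓝 (∫ x, f x ∂ν))

/-- `X n = o_p(1)` : convergence to zero in probability. -/
def TendstoZeroInProb {Ω : Type*} [MeasurableSpace Ω] (μ : Measure Ω) (X : ℕ → Ω → ℝ) : Prop :=
  ∀ δ : ℝ, 0 < δ → Tendsto (fun n => (μ {ω | δ ≤ |X n ω|}).toReal) atTop (𝓝 0)

/-- An i.i.d. sequence of real random variables (indexed by `ι`, with reference index `t0`). -/
def IsIIDSeq {Ω : Type*} [MeasurableSpace Ω] (μ : Measure Ω) {ι : Type*}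
    (ε : ι → Ω → ℝ) (t0 : ι) : Prop :=
  (∀ t, Measurable (ε t)) ∧
    iIndepFun ε μ ∧
    ∀ t, IdentDistrib (ε t) (ε t0) μ μ

/-- The chi-square law with `m` degrees of freedom, as a Gamma(m/2, 1/2) law. -/
def chiSqMeasure (m : ℕ) : Measure ℝ := gammaMeasure ((m : ℝ) / 2) (1 / 2)

/-- `ν` is a centered Gaussian law on `Fin m → ℝ` with covariance matrix `S`
(characterized through one-dimensional projections). -/
def IsCenteredGaussianWithCov {m : ℕ} (ν : Measure (Fin m → ℝ))
    (S : Matrix (Fin m) (Fin m) ℝ) : Prop :=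
  IsProbabilityMeasure ν ∧ ∀ a : Fin m → ℝ,
    ν.map (fun z => ∑ i, a i * z i) =
      gaussianReal 0 (Real.toNNReal (∑ i, ∑ j, a i * S i j * a j))

/-- The matrix `Σ = (v/4) M`, `M` having diagonal entries `a` and off-diagonal entries 1. -/
def sigmaMat (m : ℕ) (v a : ℝ) : Matrix (Fin m) (Fin m) ℝ :=
  Matrix.of fun i j => (v / 4) * (if i = j then a else 1)

/-- The time-varying volatility `h_t = g(t/n)`. -/
def hvol (g : ℝ → ℝ) (n : ℕ) (t : ℤ) : ℝ := g ((t : ℝ) / (n : ℝ))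

/-- The autoregression residual `u_t(θ)`, with the convention `u_t(θ) = 0` for `t ≤ 0`. -/
def resid {Ω : Type*} (x : ℕ → ℤ → Ω → ℝ) {p : ℕ} (θ : Fin p → ℝ) (n : ℕ) (t : ℤ)
    (ω : Ω) : ℝ :=
  if 1 ≤ t then x n t ω - ∑ i : Fin p, θ i * x n (t - ((i : ℤ) + 1)) ω else 0

/-- The design matrix of the GLS estimator. -/
def glsMat {Ω : Type*} (x : ℕ → ℤ → Ω → ℝ) (g : ℝ → ℝ) (p n : ℕ) (ω : Ω) :
    Matrix (Fin p) (Fin p) ℝ :=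
  Matrix.of fun i j => ∑ t ∈ Finset.Icc (1 : ℤ) (n : ℤ),
    ((hvol g n t) ^ 2)⁻¹ * (x n (t - 1 - (i : ℤ)) ω * x n (t - 1 - (j : ℤ)) ω)

def glsVec {Ω : Type*} (x : ℕ → ℤ → Ω → ℝ) (g : ℝ → ℝ) (p n : ℕ) (ω : Ω) : Fin p → ℝ :=
  fun i => ∑ t ∈ Finset.Icc (1 : ℤ) (n : ℤ),
    ((hvol g n t) ^ 2)⁻¹ * (x n t ω * x n (t - 1 - (i : ℤ)) ω)

/-- The GLS estimator `θ̂`. -/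
def glsEst {Ω : Type*} (x : ℕ → ℤ → Ω → ℝ) (g : ℝ → ℝ) (p n : ℕ) (ω : Ω) : Fin p → ℝ :=
  Matrix.mulVec (glsMat x g p n ω)⁻¹ (glsVec x g p n ω)

/-- The design matrix of the OLS estimator. -/
def olsMat {Ω : Type*} (x : ℕ → ℤ → Ω → ℝ) (p n : ℕ) (ω : Ω) : Matrix (Fin p) (Fin p) ℝ :=
  Matrix.of fun i j => ∑ t ∈ Finset.Icc (1 : ℤ) (n : ℤ),
    x n (t - 1 - (i : ℤ)) ω * x n (t - 1 - (j : ℤ)) ω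

def olsVec {Ω : Type*} (x : ℕ → ℤ → Ω → ℝ) (p n : ℕ) (ω : Ω) : Fin p → ℝ :=
  fun i => ∑ t ∈ Finset.Icc (1 : ℤ) (n : ℤ), x n t ω * x n (t - 1 - (i : ℤ)) ω

/-- The OLS estimator `θ̌`. -/
def olsEst {Ω : Type*} (x : ℕ → ℤ → Ω → ℝ) (p n : ℕ) (ω : Ω) : Fin p → ℝ :=
  Matrix.mulVec (olsMat x p n ω)⁻¹ (olsVec x p n ω)

/-- The normalized score vector `S(θ)` (built with the true volatility `h_t`). -/
def glsScore {Ω : Type*} (x : ℕ → ℤ → Ω → ℝ) (g : ℝ → ℝ) (p m n : ℕ) (θ : Fin p → ℝ)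
    (ω : Ω) : Fin m → ℝ :=
  fun j => (1 / (2 * Real.sqrt (n : ℝ))) * ∑ t ∈ Finset.Icc (1 : ℤ) (n : ℤ),
    ((resid x θ n t ω ^ 2 / hvol g n t ^ 2 - 1) *
      (resid x θ n (t - ((j : ℤ) + 1)) ω ^ 2 / hvol g n t ^ 2))

/-- `n⁻¹ Σ u_t(θ̂)⁴ h_t⁻⁴`, the estimator of `E ε⁴`. -/
def glsE4 {Ω : Type*} (x : ℕ → ℤ → Ω → ℝ) (g : ℝ → ℝ) (p n : ℕ) (ω : Ω) : ℝ :=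
  (n : ℝ)⁻¹ * ∑ t ∈ Finset.Icc (1 : ℤ) (n : ℤ),
    resid x (glsEst x g p n ω) n t ω ^ 4 / hvol g n t ^ 4

def glsE2 {Ω : Type*} (x : ℕ → ℤ → Ω → ℝ) (g : ℝ → ℝ) (p n : ℕ) (ω : Ω) : ℝ :=
  (n : ℝ)⁻¹ * ∑ t ∈ Finset.Icc (1 : ℤ) (n : ℤ),
    resid x (glsEst x g p n ω) n t ω ^ 2 / hvol g n t ^ 2

def glsE8 {Ω : Type*} (x : ℕ → ℤ → Ω → ℝ) (g : ℝ → ℝ) (p n : ℕ) (ω : Ω) : ℝ :=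
  (n : ℝ)⁻¹ * ∑ t ∈ Finset.Icc (1 : ℤ) (n : ℤ),
    resid x (glsEst x g p n ω) n t ω ^ 8 / hvol g n t ^ 8

/-- The estimated weight matrix `Σ̂` of the (infeasible) GLS ARCH-LM statistic. -/
def glsSigma {Ω : Type*} (x : ℕ → ℤ → Ω → ℝ) (g : ℝ → ℝ) (p m n : ℕ) (ω : Ω) :
    Matrix (Fin m) (Fin m) ℝ :=
  sigmaMat m (glsE4 x g p n ω - (glsE2 x g p n ω) ^ 2) (glsE4 x g p n ω)

/-- The (infeasible) GLS ARCH-LM statistic `Q_GLS`. -/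
def QGLS {Ω : Type*} (x : ℕ → ℤ → Ω → ℝ) (g : ℝ → ℝ) (p m n : ℕ) (ω : Ω) : ℝ :=
  dotProduct (glsScore x g p m n (glsEst x g p n ω) ω)
    (Matrix.mulVec (glsSigma x g p m n ω)⁻¹ (glsScore x g p m n (glsEst x g p n ω) ω))

/-- The (infeasible) empirical autocovariance `γ̂(j)` of the squared GLS residuals. -/
def glsGamma {Ω : Type*} (x : ℕ → ℤ → Ω → ℝ) (g : ℝ → ℝ) (p n j : ℕ) (ω : Ω) : ℝ :=
  (n : ℝ)⁻¹ * ∑ t ∈ Finset.Icc ((j : ℤ) + 1) (n : ℤ),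
    (resid x (glsEst x g p n ω) n t ω ^ 2 - hvol g n t ^ 2) *
      (resid x (glsEst x g p n ω) n (t - (j : ℤ)) ω ^ 2 - hvol g n (t - (j : ℤ)) ^ 2)

def glsOmega4 {Ω : Type*} (x : ℕ → ℤ → Ω → ℝ) (g : ℝ → ℝ) (p n : ℕ) (ω : Ω) : ℝ :=
  ((n : ℝ)⁻¹ * ∑ t ∈ Finset.Icc (1 : ℤ) (n : ℤ), resid x (glsEst x g p n ω) n t ω ^ 4) /
    glsE4 x g p n ω

def glsOmega8 {Ω : Type*} (x : ℕ → ℤ → Ω → ℝ) (g : ℝ → ℝ) (p n : ℕ) (ω : Ω) : ℝ :=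
  ((n : ℝ)⁻¹ * ∑ t ∈ Finset.Icc (1 : ℤ) (n : ℤ), resid x (glsEst x g p n ω) n t ω ^ 8) /
    glsE8 x g p n ω

/-- The (infeasible) GLS Ljung–Box type portmanteau statistic `Q*_GLS`. -/
def QstarGLS {Ω : Type*} (x : ℕ → ℤ → Ω → ℝ) (g : ℝ → ℝ) (p m n : ℕ) (ω : Ω) : ℝ :=
  ((n : ℝ) * ((n : ℝ) + 2) * ∑ i ∈ Finset.Icc 1 m,
      (glsGamma x g p n i ω / glsGamma x g p n 0 ω) ^ 2 / ((n : ℝ) - (i : ℝ))) *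
    (glsOmega4 x g p n ω ^ 2 / glsOmega8 x g p n ω)

/-- Kernel weights entries `K_{ti}` (with `K_{tt} = 0`). -/
def kerEntry (K : ℝ → ℝ) (n : ℕ) (b : ℝ) (t i : ℤ) : ℝ :=
  if t = i then 0 else K (((t : ℝ) - (i : ℝ)) / ((n : ℝ) * b))

/-- Kernel weights `w_{ti}`. -/
def kerWeight (K : ℝ → ℝ) (n : ℕ) (b : ℝ) (t i : ℤ) : ℝ :=
  kerEntry K n b t i / ∑ j ∈ Finset.Icc (1 : ℤ) (n : ℤ), kerEntry K n b t j

/-- The kernel estimator `ĥ_t²` of the variance, built from the squared OLS residuals. -/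
def hhatSq {Ω : Type*} (x : ℕ → ℤ → Ω → ℝ) (K : ℝ → ℝ) (p n : ℕ) (b : ℝ) (t : ℤ)
    (ω : Ω) : ℝ :=
  ∑ i ∈ Finset.Icc (1 : ℤ) (n : ℤ), kerWeight K n b t i * resid x (olsEst x p n ω) n i ω ^ 2

/-- The design matrix of the adaptive (ALS) estimator. -/
def alsMat {Ω : Type*} (x : ℕ → ℤ → Ω → ℝ) (K : ℝ → ℝ) (p n : ℕ) (b : ℝ) (ω : Ω) :
    Matrix (Fin p) (Fin p) ℝ :=
  Matrix.of fun i j => ∑ t ∈ Finset.Icc (1 : ℤ) (n : ℤ),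
    (hhatSq x K p n b t ω)⁻¹ * (x n (t - 1 - (i : ℤ)) ω * x n (t - 1 - (j : ℤ)) ω)

def alsVec {Ω : Type*} (x : ℕ → ℤ → Ω → ℝ) (K : ℝ → ℝ) (p n : ℕ) (b : ℝ) (ω : Ω) :
    Fin p → ℝ :=
  fun i => ∑ t ∈ Finset.Icc (1 : ℤ) (n : ℤ),
    (hhatSq x K p n b t ω)⁻¹ * (x n t ω * x n (t - 1 - (i : ℤ)) ω)

/-- The adaptive estimator `θ̃`. -/
def alsEst {Ω : Type*} (x : ℕ → ℤ → Ω → ℝ) (K : ℝ → ℝ) (p n : ℕ) (b : ℝ) (ω : Ω) :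
    Fin p → ℝ :=
  Matrix.mulVec (alsMat x K p n b ω)⁻¹ (alsVec x K p n b ω)

/-- The approximated (adaptive) score vector `S̃(θ̃)`. -/
def alsScore {Ω : Type*} (x : ℕ → ℤ → Ω → ℝ) (K : ℝ → ℝ) (p m n : ℕ) (b : ℝ) (ω : Ω) :
    Fin m → ℝ :=
  fun j => (1 / (2 * Real.sqrt (n : ℝ))) * ∑ t ∈ Finset.Icc (1 : ℤ) (n : ℤ),
    ((resid x (alsEst x K p n b ω) n t ω ^ 2 / hhatSq x K p n b t ω - 1) *
      (resid x (alsEst x K p n b ω) n (t - ((j : ℤ) + 1)) ω ^ 2 / hhatSq x K p n b t ω))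

def alsE4 {Ω : Type*} (x : ℕ → ℤ → Ω → ℝ) (K : ℝ → ℝ) (p n : ℕ) (b : ℝ) (ω : Ω) : ℝ :=
  (n : ℝ)⁻¹ * ∑ t ∈ Finset.Icc (1 : ℤ) (n : ℤ),
    resid x (alsEst x K p n b ω) n t ω ^ 4 / (hhatSq x K p n b t ω) ^ 2

def alsE2 {Ω : Type*} (x : ℕ → ℤ → Ω → ℝ) (K : ℝ → ℝ) (p n : ℕ) (b : ℝ) (ω : Ω) : ℝ :=
  (n : ℝ)⁻¹ * ∑ t ∈ Finset.Icc (1 : ℤ) (n : ℤ),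
    resid x (alsEst x K p n b ω) n t ω ^ 2 / hhatSq x K p n b t ω

def alsE8 {Ω : Type*} (x : ℕ → ℤ → Ω → ℝ) (K : ℝ → ℝ) (p n : ℕ) (b : ℝ) (ω : Ω) : ℝ :=
  (n : ℝ)⁻¹ * ∑ t ∈ Finset.Icc (1 : ℤ) (n : ℤ),
    resid x (alsEst x K p n b ω) n t ω ^ 8 / (hhatSq x K p n b t ω) ^ 4

/-- The estimated weight matrix `Σ̃` of the adaptive ARCH-LM statistic. -/
def alsSigma {Ω : Type*} (x : ℕ → ℤ → Ω → ℝ) (K : ℝ → ℝ) (p m n : ℕ) (b : ℝ) (ω : Ω) :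
    Matrix (Fin m) (Fin m) ℝ :=
  sigmaMat m (alsE4 x K p n b ω - (alsE2 x K p n b ω) ^ 2) (alsE4 x K p n b ω)

/-- The adaptive ARCH-LM statistic `Q_ALS`. -/
def QALS {Ω : Type*} (x : ℕ → ℤ → Ω → ℝ) (K : ℝ → ℝ) (p m n : ℕ) (b : ℝ) (ω : Ω) : ℝ :=
  dotProduct (alsScore x K p m n b ω)
    (Matrix.mulVec (alsSigma x K p m n b ω)⁻¹ (alsScore x K p m n b ω))

/-- The adaptive empirical autocovariance `γ̃(j)` of the squared residuals. -/
def alsGamma {Ω : Type*} (x : ℕ → ℤ → Ω → ℝ) (K : ℝ → ℝ) (p n j : ℕ) (b : ℝ) (ω : Ω) : ℝ :=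
  (n : ℝ)⁻¹ * ∑ t ∈ Finset.Icc ((j : ℤ) + 1) (n : ℤ),
    (resid x (alsEst x K p n b ω) n t ω ^ 2 - hhatSq x K p n b t ω) *
      (resid x (alsEst x K p n b ω) n (t - (j : ℤ)) ω ^ 2 - hhatSq x K p n b (t - (j : ℤ)) ω)

def alsOmega4 {Ω : Type*} (x : ℕ → ℤ → Ω → ℝ) (K : ℝ → ℝ) (p n : ℕ) (b : ℝ) (ω : Ω) : ℝ :=
  ((n : ℝ)⁻¹ * ∑ t ∈ Finset.Icc (1 : ℤ) (n : ℤ), resid x (alsEst x K p n b ω) n t ω ^ 4) /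
    alsE4 x K p n b ω

def alsOmega8 {Ω : Type*} (x : ℕ → ℤ → Ω → ℝ) (K : ℝ → ℝ) (p n : ℕ) (b : ℝ) (ω : Ω) : ℝ :=
  ((n : ℝ)⁻¹ * ∑ t ∈ Finset.Icc (1 : ℤ) (n : ℤ), resid x (alsEst x K p n b ω) n t ω ^ 8) /
    alsE8 x K p n b ω

/-- The adaptive portmanteau statistic `Q*_ALS`. -/
def QstarALS {Ω : Type*} (x : ℕ → ℤ → Ω → ℝ) (K : ℝ → ℝ) (p m n : ℕ) (b : ℝ) (ω : Ω) : ℝ :=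
  ((n : ℝ) * ((n : ℝ) + 2) * ∑ i ∈ Finset.Icc 1 m,
      (alsGamma x K p n i b ω / alsGamma x K p n 0 b ω) ^ 2 / ((n : ℝ) - (i : ℝ))) *
    (alsOmega4 x K p n b ω ^ 2 / alsOmega8 x K p n b ω)

/-- The squared ARCH(1)-type error process started in the infinite past,
`u_t² = Σ_{i≥0} α^i h_{t-i}² ε_{t-i}² ⋯ ε_t²`, with `h_l = c0` for `l ≤ 0`. -/
def usqARCH {Ω : Type*} (g : ℝ → ℝ) (c0 α : ℝ) (ε : ℤ → Ω → ℝ) (n : ℕ) (t : ℤ) (ω : Ω) : ℝ :=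
  ∑' i : ℕ, α ^ i * (if 1 ≤ t - (i : ℤ) then g (((t : ℝ) - (i : ℝ)) / (n : ℝ)) else c0) ^ 2 *
    ∏ k ∈ Finset.range (i + 1), (ε (t - (k : ℤ)) ω) ^ 2

/-- Assumption A2(i) on the kernel `K`. -/
def KernelAssumption (K : ℝ → ℝ) : Prop :=
  Measurable K ∧ (∀ v, 0 ≤ K v) ∧ (∃ CK : ℝ, ∀ v, K v ≤ CK) ∧ (∫ v, K v = 1) ∧
    MonotoneOn K (Set.Iic 0) ∧ AntitoneOn K (Set.Ici 0) ∧
    Integrable (fun v => v ^ 2 * K v) ∧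
    (∃ (S : Finset ℝ) (K' : ℝ → ℝ), (∀ v ∉ S, HasDerivAt K (K' v) v) ∧
      Integrable (fun v => |v * K' v|)) ∧
    (∃ τ : ℝ, 0 < τ ∧
      Integrable (fun s => |s| ^ τ * ‖FourierTransform.fourier (fun v : ℝ => (K v : ℂ)) s‖))


section AuxIndepProd

variable {Ω : Type*} [MeasurableSpace Ω] {μ : Measure Ω} [IsProbabilityMeasure μ]

lemma aux_pair (ε : ℕ → Ω → ℝ)
    (hind : iIndepFun ε μ)
    (φ₁ φ₂ : ℝ → ℝ) (hm1 : Measurable φ₁) (hm2 : Measurable φ₂)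
    (a b : ℕ) (hab : a ≠ b)
    (hi1 : Integrable (fun ω => φ₁ (ε a ω)) μ) (hi2 : Integrable (fun ω => φ₂ (ε b ω)) μ) :
    Integrable (fun ω => φ₁ (ε a ω) * φ₂ (ε b ω)) μ ∧
      ∫ ω, φ₁ (ε a ω) * φ₂ (ε b ω) ∂μ =
        (∫ ω, φ₁ (ε a ω) ∂μ) * ∫ ω, φ₂ (ε b ω) ∂μ := by
  have hI : IndepFun (φ₁ ∘ ε a) (φ₂ ∘ ε b) μ := (hind.indepFun hab).comp hm1 hm2
  exact ⟨hI.integrable_mul hi1 hi2, hI.integral_fun_mul_eq_mul_integral hi1.1 hi2.1⟩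

lemma aux_triple (ε : ℕ → Ω → ℝ) (hεm : ∀ t, Measurable (ε t))
    (hind : iIndepFun ε μ)
    (φ₁ φ₂ φ₃ : ℝ → ℝ) (hm1 : Measurable φ₁) (hm2 : Measurable φ₂) (hm3 : Measurable φ₃)
    (a b c : ℕ) (hab : a ≠ b) (hac : a ≠ c) (hbc : b ≠ c)
    (hi1 : Integrable (fun ω => φ₁ (ε a ω)) μ) (hi2 : Integrable (fun ω => φ₂ (ε b ω)) μ)
    (hi3 : Integrable (fun ω => φ₃ (ε c ω)) μ) :
    Integrable (fun ω => φ₁ (ε a ω) * φ₂ (ε b ω) * φ₃ (ε c ω)) μ ∧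
      ∫ ω, φ₁ (ε a ω) * φ₂ (ε b ω) * φ₃ (ε c ω) ∂μ =
        (∫ ω, φ₁ (ε a ω) * φ₂ (ε b ω) ∂μ) * ∫ ω, φ₃ (ε c ω) ∂μ := by
  classical
  set ψ : ℕ → ℝ → ℝ := fun k => if k = a then φ₁ else if k = b then φ₂ else φ₃ with hψ
  have hψm : ∀ k, Measurable (ψ k) := fun k => by
    simp only [hψ]; split_ifs <;> assumption
  have hW : ∀ k, Measurable (ψ k ∘ ε k) := fun k => (hψm k).comp (hεm k)
  have hWind : iIndepFun
      (fun k => ψ k ∘ ε k) μ := hind.comp ψ hψm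
  have hcn : c ∉ ({a, b} : Finset ℕ) := by
    simp only [Finset.mem_insert, Finset.mem_singleton]
    push_neg
    exact ⟨fun h => hac h.symm, fun h => hbc h.symm⟩
  have hI := hWind.indepFun_finset_prod_of_notMem hW hcn
  rw [Finset.prod_pair hab] at hI
  have e1 : ψ a = φ₁ := by simp [hψ]
  have e2 : ψ b = φ₂ := by simp [hψ, Ne.symm hab]
  have e3 : ψ c = φ₃ := by simp [hψ, Ne.symm hac, Ne.symm hbc]
  rw [e1, e2, e3] at hI
  obtain ⟨hp, -⟩ := aux_pair ε hind φ₁ φ₂ hm1 hm2 a b hab hi1 hi2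
  exact ⟨hI.integrable_mul hp hi3, hI.integral_fun_mul_eq_mul_integral hp.1 hi3.1⟩

lemma aux_quad (ε : ℕ → Ω → ℝ) (hεm : ∀ t, Measurable (ε t))
    (hind : iIndepFun ε μ)
    (φ₁ φ₂ φ₃ φ₄ : ℝ → ℝ) (hm1 : Measurable φ₁) (hm2 : Measurable φ₂) (hm3 : Measurable φ₃)
    (hm4 : Measurable φ₄)
    (a b c d : ℕ) (hab : a ≠ b) (hac : a ≠ c) (had : a ≠ d) (hbc : b ≠ c) (hbd : b ≠ d)
    (hcd : c ≠ d)
    (hi1 : Integrable (fun ω => φ₁ (ε a ω)) μ) (hi2 : Integrable (fun ω => φ₂ (ε b ω)) μ)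
    (hi3 : Integrable (fun ω => φ₃ (ε c ω)) μ) (hi4 : Integrable (fun ω => φ₄ (ε d ω)) μ) :
    Integrable (fun ω => φ₁ (ε a ω) * φ₂ (ε b ω) * φ₃ (ε c ω) * φ₄ (ε d ω)) μ ∧
      ∫ ω, φ₁ (ε a ω) * φ₂ (ε b ω) * φ₃ (ε c ω) * φ₄ (ε d ω) ∂μ =
        (∫ ω, φ₁ (ε a ω) * φ₂ (ε b ω) * φ₃ (ε c ω) ∂μ) * ∫ ω, φ₄ (ε d ω) ∂μ := by
  classical
  set ψ : ℕ → ℝ → ℝ :=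
    fun k => if k = a then φ₁ else if k = b then φ₂ else if k = c then φ₃ else φ₄ with hψ
  have hψm : ∀ k, Measurable (ψ k) := fun k => by
    simp only [hψ]; split_ifs <;> assumption
  have hW : ∀ k, Measurable (ψ k ∘ ε k) := fun k => (hψm k).comp (hεm k)
  have hWind : iIndepFun
      (fun k => ψ k ∘ ε k) μ := hind.comp ψ hψm
  have hdn : d ∉ ({a, b, c} : Finset ℕ) := by
    simp only [Finset.mem_insert, Finset.mem_singleton]
    push_neg
    exact ⟨fun h => had h.symm, fun h => hbd h.symm, fun h => hcd h.symm⟩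
  have hI := hWind.indepFun_finset_prod_of_notMem hW hdn
  have hane : a ∉ ({b, c} : Finset ℕ) := by simp [hab, hac]
  rw [show ({a, b, c} : Finset ℕ) = insert a {b, c} from rfl, Finset.prod_insert hane,
    Finset.prod_pair hbc, ← mul_assoc] at hI
  have e1 : ψ a = φ₁ := by simp [hψ]
  have e2 : ψ b = φ₂ := by simp [hψ, Ne.symm hab]
  have e3 : ψ c = φ₃ := by simp [hψ, Ne.symm hac, Ne.symm hbc]
  have e4 : ψ d = φ₄ := by simp [hψ, Ne.symm had, Ne.symm hbd, Ne.symm hcd]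
  rw [e1, e2, e3, e4] at hI
  obtain ⟨hp, -⟩ := aux_triple ε hεm hind φ₁ φ₂ φ₃ hm1 hm2 hm3 a b c hab hac hbc hi1 hi2 hi3
  exact ⟨hI.integrable_mul hp hi4, hI.integral_fun_mul_eq_mul_integral hp.1 hi4.1⟩

end AuxIndepProd

/-- Lemma 1, third part: asymptotically vanishing covariance between
normalized empirical autocovariances at distinct lags. -/
theorem stmt_5 {Ω : Type*} [MeasurableSpace Ω] (μ : Measure Ω) [IsProbabilityMeasure μ]
    (g : ℝ → ℝ) (hgpos : ∀ r ∈ Set.Ioc (0 : ℝ) 1, 0 < g r)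
    (hgbdd : ∃ C : ℝ, ∀ r ∈ Set.Ioc (0 : ℝ) 1, |g r| ≤ C)
    (hglip : PiecewiseLipschitzOn01 g)
    (ε : ℕ → Ω → ℝ) (hiid : IsIIDSeq μ ε 0)
    (hmean : ∫ ω, ε 0 ω ∂μ = 0) (hvar : ∫ ω, (ε 0 ω) ^ 2 ∂μ = 1)
    (hmom : ∃ s : ℝ, 8 < s ∧ Integrable (fun ω => |ε 0 ω| ^ s) μ)
    (i j : ℕ) (hi : 1 ≤ i) (hj : 1 ≤ j) (hij : i ≠ j)
    (A : ℕ → ℕ → Ω → ℝ)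
    (hA : ∀ k n ω, A k n ω = (Real.sqrt (n : ℝ))⁻¹ *
      ∑ t ∈ Finset.Icc (k + 1) n,
        ((g ((t : ℝ) / (n : ℝ)) * ε t ω) ^ 2 - g ((t : ℝ) / (n : ℝ)) ^ 2) *
          ((g (((t : ℝ) - (k : ℝ)) / (n : ℝ)) * ε (t - k) ω) ^ 2 -
            g (((t : ℝ) - (k : ℝ)) / (n : ℝ)) ^ 2)) :
    Tendsto (fun n =>
        (∫ ω, A i n ω * A j n ω ∂μ) - (∫ ω, A i n ω ∂μ) * (∫ ω, A j n ω ∂μ))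
      atTop (𝓝 0) := by
  classical
  obtain ⟨hεm, hind, hident⟩ := hiid
  obtain ⟨sm, hsm, hsint⟩ := hmom
  have hq1 : Measurable (fun z : ℝ => z ^ 2 - 1) := by fun_prop
  have hq2 : Measurable (fun z : ℝ => (z ^ 2 - 1) ^ 2) := by fun_prop
  -- integrability of powers of ε 0
  have hpow : ∀ k : ℕ, (k : ℝ) ≤ sm → Integrable (fun ω => ε 0 ω ^ k) μ := by
    intro k hk
    refine Integrable.mono' ((integrable_const (1 : ℝ)).add hsint)
      (((hεm 0).pow_const k).aestronglyMeasurable) (Filter.Eventually.of_forall fun ω => ?_)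
    simp only [Pi.add_apply]
    have hx : (0 : ℝ) ≤ |ε 0 ω| := abs_nonneg _
    have hnorm : ‖ε 0 ω ^ k‖ = |ε 0 ω| ^ k := by rw [Real.norm_eq_abs, abs_pow]
    rw [hnorm]
    rcases le_or_gt (|ε 0 ω|) 1 with h | h
    · have h1 : |ε 0 ω| ^ k ≤ 1 := pow_le_one₀ hx h
      have h2 : (0 : ℝ) ≤ |ε 0 ω| ^ sm := Real.rpow_nonneg hx _
      simpa using add_le_add h1 h2
    · have h1 : |ε 0 ω| ^ k = |ε 0 ω| ^ (k : ℝ) := (Real.rpow_natCast _ k).symm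
      have h2 : |ε 0 ω| ^ (k : ℝ) ≤ |ε 0 ω| ^ sm :=
        Real.rpow_le_rpow_of_exponent_le h.le hk
      rw [h1]
      linarith
  have hε2 : Integrable (fun ω => ε 0 ω ^ 2) μ := hpow 2 (by push_cast; linarith)
  have hε4 : Integrable (fun ω => ε 0 ω ^ 4) μ := hpow 4 (by push_cast; linarith)
  have hZ0 : Integrable (fun ω => ε 0 ω ^ 2 - 1) μ := hε2.sub (integrable_const 1)
  have hZ0sq : Integrable (fun ω => (ε 0 ω ^ 2 - 1) ^ 2) μ := by
    have he : (fun ω => (ε 0 ω ^ 2 - 1) ^ 2) =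
        fun ω => ε 0 ω ^ 4 - 2 * ε 0 ω ^ 2 + 1 := funext fun ω => by ring
    rw [he]
    exact (hε4.sub (hε2.const_mul 2)).add (integrable_const 1)
  have hZint : ∀ t, Integrable (fun ω => ε t ω ^ 2 - 1) μ := fun t =>
    (((hident t).comp hq1).integrable_iff).2 hZ0
  have hZsq : ∀ t, Integrable (fun ω => (ε t ω ^ 2 - 1) ^ 2) μ := fun t =>
    (((hident t).comp hq2).integrable_iff).2 hZ0sq
  have hZzero : ∀ t, ∫ ω, (ε t ω ^ 2 - 1) ∂μ = 0 := by
    intro t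
    have h1 : ∫ ω, (ε t ω ^ 2 - 1) ∂μ = ∫ ω, (ε 0 ω ^ 2 - 1) ∂μ :=
      ((hident t).comp hq1).integral_eq
    rw [h1, integral_sub hε2 (integrable_const 1), hvar, integral_const]
    simp
  -- the key vanishing of fourth-order cross moments
  have key : ∀ t u : ℕ, i + 1 ≤ t → j + 1 ≤ u →
      Integrable (fun ω => (ε t ω ^ 2 - 1) * (ε (t - i) ω ^ 2 - 1) *
        ((ε u ω ^ 2 - 1) * (ε (u - j) ω ^ 2 - 1))) μ ∧
      ∫ ω, (ε t ω ^ 2 - 1) * (ε (t - i) ω ^ 2 - 1) *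
        ((ε u ω ^ 2 - 1) * (ε (u - j) ω ^ 2 - 1)) ∂μ = 0 := by
    intro t u ht hu
    by_cases h1 : t = u
    · subst h1
      have d1 : t ≠ t - j := by omega
      have d2 : t ≠ t - i := by omega
      have d3 : t - j ≠ t - i := by omega
      obtain ⟨h3, h3v⟩ := aux_triple ε hεm hind
        (fun z => (z ^ 2 - 1) ^ 2) (fun z => z ^ 2 - 1) (fun z => z ^ 2 - 1)
        hq2 hq1 hq1 t (t - j) (t - i) d1 d2 d3 (hZsq t) (hZint (t - j)) (hZint (t - i))
      have heq : (fun ω => (ε t ω ^ 2 - 1) * (ε (t - i) ω ^ 2 - 1) *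
          ((ε t ω ^ 2 - 1) * (ε (t - j) ω ^ 2 - 1))) =
          fun ω => (ε t ω ^ 2 - 1) ^ 2 * (ε (t - j) ω ^ 2 - 1) * (ε (t - i) ω ^ 2 - 1) :=
        funext fun ω => by ring
      rw [heq]
      exact ⟨h3, by rw [h3v, hZzero, mul_zero]⟩
    · by_cases h2 : t = u - j
      · have d1 : t ≠ u := h1
        have d2 : t ≠ t - i := by omega
        have d3 : u ≠ t - i := by omega
        obtain ⟨h3, h3v⟩ := aux_triple ε hεm hind
          (fun z => (z ^ 2 - 1) ^ 2) (fun z => z ^ 2 - 1) (fun z => z ^ 2 - 1)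
          hq2 hq1 hq1 t u (t - i) d1 d2 d3 (hZsq t) (hZint u) (hZint (t - i))
        have heq : (fun ω => (ε t ω ^ 2 - 1) * (ε (t - i) ω ^ 2 - 1) *
            ((ε u ω ^ 2 - 1) * (ε (u - j) ω ^ 2 - 1))) =
            fun ω => (ε t ω ^ 2 - 1) ^ 2 * (ε u ω ^ 2 - 1) * (ε (t - i) ω ^ 2 - 1) :=
          funext fun ω => by rw [← h2]; ring
        rw [heq]
        exact ⟨h3, by rw [h3v, hZzero, mul_zero]⟩
      · by_cases h3 : u = t - i
        · have d1 : u ≠ u - j := by omega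
          have d2 : u ≠ t := by omega
          have d3 : u - j ≠ t := by omega
          obtain ⟨hh, hhv⟩ := aux_triple ε hεm hind
            (fun z => (z ^ 2 - 1) ^ 2) (fun z => z ^ 2 - 1) (fun z => z ^ 2 - 1)
            hq2 hq1 hq1 u (u - j) t d1 d2 d3 (hZsq u) (hZint (u - j)) (hZint t)
          have heq : (fun ω => (ε t ω ^ 2 - 1) * (ε (t - i) ω ^ 2 - 1) *
              ((ε u ω ^ 2 - 1) * (ε (u - j) ω ^ 2 - 1))) =
              fun ω => (ε u ω ^ 2 - 1) ^ 2 * (ε (u - j) ω ^ 2 - 1) * (ε t ω ^ 2 - 1) :=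
            funext fun ω => by rw [← h3]; ring
          rw [heq]
          exact ⟨hh, by rw [hhv, hZzero, mul_zero]⟩
        · by_cases h4 : t - i = u - j
          · have d1 : t - i ≠ u := by omega
            have d2 : t - i ≠ t := by omega
            have d3 : u ≠ t := by omega
            obtain ⟨hh, hhv⟩ := aux_triple ε hεm hind
              (fun z => (z ^ 2 - 1) ^ 2) (fun z => z ^ 2 - 1) (fun z => z ^ 2 - 1)
              hq2 hq1 hq1 (t - i) u t d1 d2 d3 (hZsq (t - i)) (hZint u) (hZint t)
            have heq : (fun ω => (ε t ω ^ 2 - 1) * (ε (t - i) ω ^ 2 - 1) *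
                ((ε u ω ^ 2 - 1) * (ε (u - j) ω ^ 2 - 1))) =
                fun ω => (ε (t - i) ω ^ 2 - 1) ^ 2 * (ε u ω ^ 2 - 1) * (ε t ω ^ 2 - 1) :=
              funext fun ω => by rw [← h4]; ring
            rw [heq]
            exact ⟨hh, by rw [hhv, hZzero, mul_zero]⟩
          · have d1 : t ≠ t - i := by omega
            have d2 : t ≠ u := h1
            have d3 : t ≠ u - j := h2
            have d4 : t - i ≠ u := by omega
            have d5 : t - i ≠ u - j := h4
            have d6 : u ≠ u - j := by omega
            obtain ⟨hh, hhv⟩ := aux_quad ε hεm hind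
              (fun z => z ^ 2 - 1) (fun z => z ^ 2 - 1) (fun z => z ^ 2 - 1)
              (fun z => z ^ 2 - 1) hq1 hq1 hq1 hq1 t (t - i) u (u - j)
              d1 d2 d3 d4 d5 d6 (hZint t) (hZint (t - i)) (hZint u) (hZint (u - j))
            have heq : (fun ω => (ε t ω ^ 2 - 1) * (ε (t - i) ω ^ 2 - 1) *
                ((ε u ω ^ 2 - 1) * (ε (u - j) ω ^ 2 - 1))) =
                fun ω => (ε t ω ^ 2 - 1) * (ε (t - i) ω ^ 2 - 1) * (ε u ω ^ 2 - 1) *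
                  (ε (u - j) ω ^ 2 - 1) :=
              funext fun ω => by ring
            rw [heq]
            exact ⟨hh, by rw [hhv, hZzero, mul_zero]⟩
  -- the means vanish
  have hAzero : ∀ k : ℕ, 1 ≤ k → ∀ n : ℕ, ∫ ω, A k n ω ∂μ = 0 := by
    intro k hk n
    have hrw : ∫ ω, A k n ω ∂μ = ∫ ω, ∑ t ∈ Finset.Icc (k + 1) n,
        ((Real.sqrt (n : ℝ))⁻¹ * (g ((t : ℝ) / (n : ℝ)) ^ 2 *
          g (((t : ℝ) - (k : ℝ)) / (n : ℝ)) ^ 2)) *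
          ((ε t ω ^ 2 - 1) * (ε (t - k) ω ^ 2 - 1)) ∂μ := by
      refine integral_congr_ae (Filter.Eventually.of_forall fun ω => ?_)
      rw [hA, Finset.mul_sum]
      exact Finset.sum_congr rfl fun t _ => by ring
    rw [hrw, integral_finset_sum _ (fun t htm => ?_)]
    · refine Finset.sum_eq_zero fun t htm => ?_
      have htk : k + 1 ≤ t := (Finset.mem_Icc.1 htm).1
      rw [MeasureTheory.integral_const_mul _ _,
        (aux_pair ε hind (fun z => z ^ 2 - 1) (fun z => z ^ 2 - 1) hq1 hq1 t (t - k)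
          (by omega) (hZint t) (hZint (t - k))).2, hZzero, zero_mul, mul_zero]
    · have htk : k + 1 ≤ t := (Finset.mem_Icc.1 htm).1
      exact ((aux_pair ε hind (fun z => z ^ 2 - 1) (fun z => z ^ 2 - 1) hq1 hq1 t (t - k)
        (by omega) (hZint t) (hZint (t - k))).1).const_mul _
  -- the second moment of the product vanishes
  have hAA : ∀ n : ℕ, ∫ ω, A i n ω * A j n ω ∂μ = 0 := by
    intro n
    have hrw : ∫ ω, A i n ω * A j n ω ∂μ = ∫ ω, ∑ t ∈ Finset.Icc (i + 1) n,
        ∑ u ∈ Finset.Icc (j + 1) n,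
        (((Real.sqrt (n : ℝ))⁻¹ * (g ((t : ℝ) / (n : ℝ)) ^ 2 *
            g (((t : ℝ) - (i : ℝ)) / (n : ℝ)) ^ 2)) *
          ((Real.sqrt (n : ℝ))⁻¹ * (g ((u : ℝ) / (n : ℝ)) ^ 2 *
            g (((u : ℝ) - (j : ℝ)) / (n : ℝ)) ^ 2))) *
          ((ε t ω ^ 2 - 1) * (ε (t - i) ω ^ 2 - 1) *
            ((ε u ω ^ 2 - 1) * (ε (u - j) ω ^ 2 - 1))) ∂μ := by
      refine integral_congr_ae (Filter.Eventually.of_forall fun ω => ?_)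
      simp only [hA]
      rw [Finset.mul_sum, Finset.mul_sum, Finset.sum_mul_sum]
      exact Finset.sum_congr rfl fun t _ => Finset.sum_congr rfl fun u _ => by ring
    have hint : ∀ t ∈ Finset.Icc (i + 1) n, ∀ u ∈ Finset.Icc (j + 1) n,
        Integrable (fun ω =>
          (((Real.sqrt (n : ℝ))⁻¹ * (g ((t : ℝ) / (n : ℝ)) ^ 2 *
              g (((t : ℝ) - (i : ℝ)) / (n : ℝ)) ^ 2)) *
            ((Real.sqrt (n : ℝ))⁻¹ * (g ((u : ℝ) / (n : ℝ)) ^ 2 *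
              g (((u : ℝ) - (j : ℝ)) / (n : ℝ)) ^ 2))) *
            ((ε t ω ^ 2 - 1) * (ε (t - i) ω ^ 2 - 1) *
              ((ε u ω ^ 2 - 1) * (ε (u - j) ω ^ 2 - 1)))) μ := by
      intro t htm u hum
      exact ((key t u (Finset.mem_Icc.1 htm).1 (Finset.mem_Icc.1 hum).1).1).const_mul _
    rw [hrw, integral_finset_sum _ (fun t htm => integrable_finset_sum _ (hint t htm))]
    refine Finset.sum_eq_zero fun t htm => ?_
    rw [integral_finset_sum _ (hint t htm)]
    refine Finset.sum_eq_zero fun u hum => ?_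
    rw [MeasureTheory.integral_const_mul _ _,
      (key t u (Finset.mem_Icc.1 htm).1 (Finset.mem_Icc.1 hum).1).2, mul_zero]
  have hgoal : (fun n => (∫ ω, A i n ω * A j n ω ∂μ) -
      (∫ ω, A i n ω ∂μ) * ∫ ω, A j n ω ∂μ) = fun _ => (0 : ℝ) :=
    funext fun n => by rw [hAA n, hAzero i hi n, hAzero j hj n]; ring
  rw [hgoal]
  exact tendsto_const_nhds


end
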